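/- (Necessity of integrality of the NUT-charge.) Assume the Chen–Teo parameter hypotheses, and suppose there exist positive real numbers α_0, α_1, α_2, α_3, integers ℓ_1, ℓ_2, and signs ε_1, ε_2 ∈ {1, −1} satisfying the regularity system: ℓ_1·p·α_1 + ε_1·q·α_2 = α_0; p·α_1 + ℓ_2·q·α_2 = ε_2·α_3; ℓ_1·p·α_1·F_1 + ε_1·q·α_2·F_2 = α_0·F_0; and p·α_1·F_1 + ℓ_2·q·α_2·F_2 = ε_2·α_3·F_3. Then necessarily ε_1 = ε_2 = 1, α_1 = (b·(1−q)/(p+q))·α_3, α_2 = (a·(1−p)/(p+q))·α_0, and the normalized total NUT-charge satisfies n = ℓ_1·ℓ_2 − 1; in particular n is an integer. -/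

import Mathlib

theorem statement15 (p q a b f₂ A F₀ F₁ F₂ F₃ : ℝ)
    (hp : -1 < p) (hp1 : p < 1) (hq : -1 < q) (hq1 : q < 1)
    (hpq : 0 < p + q) (hpq0 : p * q ≠ 0)
    (ha : 0 < a) (hb : 0 < b) (hf₂ : 0 < f₂) (hA : 0 < A)
    (h10 : F₁ - F₀ = -(f₂ ^ 2 / A) * (a * (1 - p) / p))
    (h21 : F₂ - F₁ = (f₂ ^ 2 / A) * ((p + q) / (p * q)))
    (h32 : F₃ - F₂ = -(f₂ ^ 2 / A) * (b * (1 - q) / q))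
    (α₀ α₁ α₂ α₃ : ℝ)
    (hα₀ : 0 < α₀) (hα₁ : 0 < α₁) (hα₂ : 0 < α₂) (hα₃ : 0 < α₃)
    (ℓ₁ ℓ₂ : ℤ) (ε₁ ε₂ : ℝ)
    (hε₁ : ε₁ = 1 ∨ ε₁ = -1) (hε₂ : ε₂ = 1 ∨ ε₂ = -1)
    (e1 : (ℓ₁ : ℝ) * p * α₁ + ε₁ * q * α₂ = α₀)
    (e2 : p * α₁ + (ℓ₂ : ℝ) * q * α₂ = ε₂ * α₃)
    (e3 : (ℓ₁ : ℝ) * p * α₁ * F₁ + ε₁ * q * α₂ * F₂ = α₀ * F₀)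
    (e4 : p * α₁ * F₁ + (ℓ₂ : ℝ) * q * α₂ * F₂ = ε₂ * α₃ * F₃) :
    ε₁ = 1 ∧ ε₂ = 1 ∧
      α₁ = (b * (1 - q) / (p + q)) * α₃ ∧
      α₂ = (a * (1 - p) / (p + q)) * α₀ ∧
      (p + q) * (p + q - a * q * (1 - p) - b * p * (1 - q)) /
          (a * b * p * q * (1 - p) * (1 - q)) = (ℓ₁ : ℝ) * (ℓ₂ : ℝ) - 1 := by
  have hp0 : p ≠ 0 := fun h => hpq0 (by rw [h]; ring)
  have hq0 : q ≠ 0 := fun h => hpq0 (by rw [h]; ring)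
  have hc : 0 < f₂ ^ 2 / A := div_pos (pow_pos hf₂ 2) hA
  set c := f₂ ^ 2 / A with hcdef
  have hc0 : c ≠ 0 := hc.ne'
  have d1 : ε₁ * q * α₂ * (F₂ - F₁) = α₀ * (F₀ - F₁) := by linear_combination e3 - F₁ * e1
  rw [h21, show F₀ - F₁ = c * (a * (1 - p) / p) by linarith] at d1
  have A1 : ε₁ * α₂ * (p + q) = α₀ * (a * (1 - p)) := by
    have h'' : ε₁ * α₂ * (p + q) * (c * q * p) = α₀ * (a * (1 - p)) * (c * q * p) := by
      field_simp at d1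
      linear_combination (c * q * p) * d1
    exact mul_right_cancel₀ (mul_ne_zero (mul_ne_zero hc0 hq0) hp0) h''
  have d2 : p * α₁ * (F₁ - F₂) = ε₂ * α₃ * (F₃ - F₂) := by linear_combination e4 - F₂ * e2
  rw [h32, show F₁ - F₂ = -(c * ((p + q) / (p * q))) by linarith] at d2
  have A2 : α₁ * (p + q) = ε₂ * α₃ * (b * (1 - q)) := by
    have h'' : α₁ * (p + q) * (c * q * p) = ε₂ * α₃ * (b * (1 - q)) * (c * q * p) := by
      field_simp at d2
      linear_combination -(c * q * p) * d2
    exact mul_right_cancel₀ (mul_ne_zero (mul_ne_zero hc0 hq0) hp0) h''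
  have hε1 : ε₁ = 1 := by
    rcases hε₁ with h | h
    · exact h
    · exfalso; rw [h] at A1
      nlinarith [mul_pos hα₂ hpq, mul_pos hα₀ (mul_pos ha (by linarith : (0:ℝ) < 1 - p))]
  have hε2 : ε₂ = 1 := by
    rcases hε₂ with h | h
    · exact h
    · exfalso; rw [h] at A2
      nlinarith [mul_pos hα₁ hpq, mul_pos hα₃ (mul_pos hb (by linarith : (0:ℝ) < 1 - q))]
  rw [hε1] at A1 e1
  rw [hε2] at A2 e2
  have hα1 : α₁ = (b * (1 - q) / (p + q)) * α₃ := by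
    rw [div_mul_eq_mul_div, eq_div_iff hpq.ne']
    linear_combination A2
  have hα2 : α₂ = (a * (1 - p) / (p + q)) * α₀ := by
    rw [div_mul_eq_mul_div, eq_div_iff hpq.ne']
    linear_combination A1
  refine ⟨hε1, hε2, hα1, hα2, ?_⟩
  have k1 : (ℓ₁ : ℝ) * p * (b * (1 - q)) * α₃ = α₀ * ((p + q) - a * q * (1 - p)) := by
    linear_combination (p + q) * e1 - (ℓ₁ : ℝ) * p * A2 - q * A1
  have k2 : (ℓ₂ : ℝ) * q * (a * (1 - p)) * α₀ = α₃ * ((p + q) - b * p * (1 - q)) := by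
    linear_combination (p + q) * e2 - p * A2 - (ℓ₂ : ℝ) * q * A1
  have prod : (ℓ₁ : ℝ) * (ℓ₂ : ℝ) * (p * q * a * b * (1 - p) * (1 - q)) * (α₀ * α₃)
      = ((p + q) - a * q * (1 - p)) * ((p + q) - b * p * (1 - q)) * (α₀ * α₃) := by
    linear_combination ((ℓ₂ : ℝ) * q * (a * (1 - p)) * α₀) * k1
      + (α₀ * ((p + q) - a * q * (1 - p))) * k2
  have prod' : (ℓ₁ : ℝ) * (ℓ₂ : ℝ) * (p * q * a * b * (1 - p) * (1 - q))
      = ((p + q) - a * q * (1 - p)) * ((p + q) - b * p * (1 - q)) :=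
    mul_right_cancel₀ (mul_pos hα₀ hα₃).ne' prod
  have hden : a * b * p * q * (1 - p) * (1 - q) ≠ 0 := by
    apply mul_ne_zero; apply mul_ne_zero; apply mul_ne_zero; apply mul_ne_zero
    exacts [mul_ne_zero ha.ne' hb.ne', hp0, hq0, by linarith, by linarith]
  rw [div_eq_iff hden]
  linear_combination -prod'
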